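/- Suppose X₁, X₂, …, X_n and Y₁, Y₂, …, Y_n are two families of independent d-dimensional random vectors (d ≥ 1), with cumulative distribution functions F₁, …, F_n and G₁, …, G_n respectively. Let X = X₁ + ⋯ + X_n and Y = Y₁ + ⋯ + Y_n, with cumulative distribution functions F and G. If sup_{x ∈ ℝ^d} |F_k(x) − G_k(x)| ≤ ε_k for each 1 ≤ k ≤ n, then sup_{x ∈ ℝ^d} |F(x) − G(x)| ≤ ε₁ + ε₂ + ⋯ + ε_n. -/

import Mathlib

/-!
STATEMENT 3: If `X₁, …, Xₙ` and `Y₁, …, Yₙ` are two families of independent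
`d`-dimensional random vectors whose (joint) cumulative distribution functions satisfy
`sup_x |F_k(x) - G_k(x)| ≤ ε_k` for each `k`, then the cumulative distribution functions
`F, G` of the sums `X = X₁ + ⋯ + Xₙ` and `Y = Y₁ + ⋯ + Yₙ` satisfy
`sup_x |F(x) - G(x)| ≤ ε₁ + ⋯ + εₙ`.
-/

open MeasureTheory ProbabilityTheory Filter

/-- CDF of a measure on `Fin d → ℝ`. -/
noncomputable def cdfm {d : ℕ} (m : Measure (Fin d → ℝ)) (u : Fin d → ℝ) : ℝ :=
  (m {y | ∀ i, y i ≤ u i}).toReal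

lemma measurableSet_cdfSet {d : ℕ} (x : Fin d → ℝ) :
    MeasurableSet {y : Fin d → ℝ | ∀ i, y i ≤ x i} := by
  have : {y : Fin d → ℝ | ∀ i, y i ≤ x i} = ⋂ i, {y | y i ≤ x i} := by
    ext y; simp
  rw [this]
  exact MeasurableSet.iInter fun i =>
    measurableSet_le (measurable_pi_apply i) measurable_const

/-- The (joint) cumulative distribution function of a `d`-dimensional random vector `Z`:
`x ↦ P(Z⁽¹⁾ ≤ x₁, …, Z⁽ᵈ⁾ ≤ x_d)`. -/
noncomputable def vecCDF {Ω : Type*} [MeasurableSpace Ω] (μ : Measure Ω) {d : ℕ}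
    (Z : Ω → Fin d → ℝ) (x : Fin d → ℝ) : ℝ :=
  (μ {ω | ∀ i : Fin d, Z ω i ≤ x i}).toReal

lemma vecCDF_eq_cdfm {Ω : Type*} [MeasurableSpace Ω] (μ : Measure Ω) {d : ℕ}
    {Z : Ω → Fin d → ℝ} (hZ : Measurable Z) (x : Fin d → ℝ) :
    vecCDF μ Z x = cdfm (μ.map Z) x := by
  unfold vecCDF cdfm
  rw [Measure.map_apply hZ (measurableSet_cdfSet x)]
  rfl

/-- Step lemma: replacing one independent factor changes the cdf of the sum
by at most `ε`. -/
lemma step_lemma {d : ℕ} (m1 m2 : Measure (Fin d → ℝ))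
    [IsProbabilityMeasure m1] [IsProbabilityMeasure m2]
    {β : Type*} [MeasurableSpace β] (κ : Measure β) [IsProbabilityMeasure κ]
    (φ : β → Fin d → ℝ) (hφ : Measurable φ) (ε : ℝ) (x : Fin d → ℝ)
    (h : ∀ u, |cdfm m1 u - cdfm m2 u| ≤ ε) :
    |((m1.prod κ) {p | ∀ i, p.1 i + φ p.2 i ≤ x i}).toReal -
      ((m2.prod κ) {p | ∀ i, p.1 i + φ p.2 i ≤ x i}).toReal| ≤ ε := by
  set T : Set ((Fin d → ℝ) × β) := {p | ∀ i, p.1 i + φ p.2 i ≤ x i} with hT_def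
  have hT : MeasurableSet T := by
    have : T = ⋂ i, {p : (Fin d → ℝ) × β | p.1 i + φ p.2 i ≤ x i} := by
      ext p; simp [hT_def]
    rw [this]
    exact MeasurableSet.iInter fun i =>
      measurableSet_le (measurable_fst.eval.add ((hφ.comp measurable_snd).eval))
        measurable_const
  have hpre : ∀ b : β, ((fun a => (a, b)) ⁻¹' T) = {y : Fin d → ℝ | ∀ i, y i ≤ x i - φ b i} := by
    intro b; ext y
    simp only [Set.mem_preimage, hT_def, Set.mem_setOf_eq]
    exact forall_congr' fun i => (le_sub_iff_add_le).symm
  have key : ∀ (m : Measure (Fin d → ℝ)) [IsProbabilityMeasure m],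
      ((m.prod κ) T).toReal = ∫ b, cdfm m (fun i => x i - φ b i) ∂κ := by
    intro m _
    rw [Measure.prod_apply_symm hT]
    rw [← integral_toReal]
    · apply integral_congr_ae
      filter_upwards with b
      rw [hpre b]; rfl
    · exact (measurable_measure_prodMk_right hT).aemeasurable
    · filter_upwards with b
      exact lt_of_le_of_lt (measure_mono (Set.subset_univ _))
        (by simp [measure_lt_top])
  rw [key m1, key m2]
  have hmeas : ∀ (m : Measure (Fin d → ℝ)) [IsProbabilityMeasure m],
      Measurable fun b => cdfm m (fun i => x i - φ b i) := by
    intro m _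
    have : (fun b => cdfm m (fun i => x i - φ b i)) =
        fun b => (m ((fun a => (a, b)) ⁻¹' T)).toReal := by
      funext b; rw [hpre b]; rfl
    rw [this]
    exact (measurable_measure_prodMk_right hT).ennreal_toReal
  have hint : ∀ (m : Measure (Fin d → ℝ)) [IsProbabilityMeasure m],
      Integrable (fun b => cdfm m (fun i => x i - φ b i)) κ := by
    intro m _
    refine (integrable_const (1 : ℝ)).mono' (hmeas m).aestronglyMeasurable ?_
    filter_upwards with b
    simp only [Real.norm_eq_abs, cdfm]
    rw [abs_of_nonneg ENNReal.toReal_nonneg]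
    exact ENNReal.toReal_le_of_le_ofReal zero_le_one (by simpa using prob_le_one)
  rw [← integral_sub (hint m1) (hint m2)]
  calc |∫ b, (cdfm m1 (fun i => x i - φ b i) - cdfm m2 (fun i => x i - φ b i)) ∂κ|
      ≤ ε * (κ Set.univ).toReal := by
        rw [← Real.norm_eq_abs]
        exact norm_integral_le_of_norm_le_const
          (Filter.Eventually.of_forall fun b => by
            rw [Real.norm_eq_abs]; exact h _)
    _ = ε := by simp

/-- The sum set is measurable. -/
lemma measurableSet_sumSet {d n : ℕ} (x : Fin d → ℝ) :
    MeasurableSet {z : Fin n → Fin d → ℝ | ∀ i, ∑ k, z k i ≤ x i} := by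
  have : {z : Fin n → Fin d → ℝ | ∀ i, ∑ k, z k i ≤ x i} =
      ⋂ i, {z : Fin n → Fin d → ℝ | ∑ k, z k i ≤ x i} := by ext z; simp
  rw [this]
  exact MeasurableSet.iInter fun i => measurableSet_le
    (Finset.measurable_sum _ fun k _ => (measurable_pi_apply k).eval)
    measurable_const

/-- The joint law of an independent family is the product of the laws. -/
lemma map_eq_pi {Ω : Type*} [MeasurableSpace Ω] (μ : Measure Ω) [IsProbabilityMeasure μ]
    {d n : ℕ} (X : Fin n → Ω → Fin d → ℝ) (hXmeas : ∀ k, Measurable (X k))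
    (hXindep : iIndepFun X μ) :
    μ.map (fun ω (k : Fin n) => X k ω) = Measure.pi (fun k => μ.map (X k)) := by
  haveI : ∀ k, IsProbabilityMeasure (μ.map (X k)) := fun k =>
    Measure.isProbabilityMeasure_map (hXmeas k).aemeasurable
  refine (Measure.pi_eq (μ := fun k => μ.map (X k)) fun s hs => ?_).symm
  rw [Measure.map_apply (measurable_pi_iff.2 hXmeas) (MeasurableSet.univ_pi hs)]
  have hpre : (fun ω (k : Fin n) => X k ω) ⁻¹' Set.univ.pi s = ⋂ k, X k ⁻¹' s k := by
    ext ω; simp [Set.mem_univ_pi]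
  rw [hpre, hXindep.meas_iInter fun k => ⟨s k, hs k, rfl⟩]
  exact Finset.prod_congr rfl fun k _ => (Measure.map_apply (hXmeas k) (hs k)).symm

/-- Main lemma in terms of product measures. -/
lemma pi_cdf_diff {d n : ℕ} (ν ρ : Fin n → Measure (Fin d → ℝ))
    [hν : ∀ k, IsProbabilityMeasure (ν k)] [hρ : ∀ k, IsProbabilityMeasure (ρ k)]
    (ε : Fin n → ℝ) (h : ∀ k u, |cdfm (ν k) u - cdfm (ρ k) u| ≤ ε k) (x : Fin d → ℝ) :
    |((Measure.pi ν) {z | ∀ i, ∑ k, z k i ≤ x i}).toReal -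
      ((Measure.pi ρ) {z | ∀ i, ∑ k, z k i ≤ x i}).toReal| ≤ ∑ k, ε k := by
  cases n with
  | zero =>
    have : ν = ρ := funext fun k => k.elim0
    subst this
    simp
  | succ n =>
    set Sx : Set (Fin (n + 1) → Fin d → ℝ) := {z | ∀ i, ∑ k, z k i ≤ x i} with hSx_def
    set M : ℕ → Fin (n + 1) → Measure (Fin d → ℝ) :=
      fun j k => if (k : ℕ) < j then ρ k else ν k with hM_def
    haveI hMprob : ∀ j k, IsProbabilityMeasure (M j k) := by
      intro j k
      simp only [hM_def]
      split
      · exact hρ k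
      · exact hν k
    set f : ℕ → ℝ := fun j => ((Measure.pi (M j)) Sx).toReal with hf_def
    have hf0 : f 0 = ((Measure.pi ν) Sx).toReal := by
      have hM0 : M 0 = ν := funext fun k => by simp [hM_def]
      simp only [hf_def]
      rw [hM0]
    have hfn : f (n + 1) = ((Measure.pi ρ) Sx).toReal := by
      have hMn : M (n + 1) = ρ := funext fun k => by simp [hM_def, k.isLt]
      simp only [hf_def]
      rw [hMn]
    have claim : ∀ j : Fin (n + 1), |f ↑j - f (↑j + 1)| ≤ ε j := by
      intro j
      set e := MeasurableEquiv.piFinSuccAbove (fun _ : Fin (n + 1) => (Fin d → ℝ)) j with he_def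
      set T : Set ((Fin d → ℝ) × (Fin n → Fin d → ℝ)) :=
        {p | ∀ i, p.1 i + (fun i' => ∑ k, p.2 k i') i ≤ x i} with hT_def
      have hT : MeasurableSet T := by
        have : T = ⋂ i, {p : (Fin d → ℝ) × (Fin n → Fin d → ℝ) |
            p.1 i + ∑ k, p.2 k i ≤ x i} := by
          ext p; simp [hT_def]
        rw [this]
        exact MeasurableSet.iInter fun i => measurableSet_le
          (measurable_fst.eval.add
            (Finset.measurable_sum _ fun k _ => (measurable_snd.eval (a := k)).eval))
          measurable_const
      have he_apply : ∀ z, e z = (z j, fun k => z (j.succAbove k)) := fun z => rfl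
      have hpre : ⇑e ⁻¹' T = Sx := by
        ext z
        have hsum : ∀ i, ∑ k, z k i = z j i + ∑ k, z (j.succAbove k) i := fun i =>
          Fin.sum_univ_succAbove (fun k => z k i) j
        simp only [Set.mem_preimage, he_apply, hT_def, Set.mem_setOf_eq, hSx_def]
        exact forall_congr' fun i => by rw [hsum i]
      have rest_eq : (fun k => M ↑j (j.succAbove k)) = fun k => M (↑j + 1) (j.succAbove k) := by
        funext k
        have hne : (↑(j.succAbove k) : ℕ) ≠ ↑j :=
          fun hh => (j.succAbove_ne k) (Fin.val_injective hh)
        simp only [hM_def]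
        have hiff : ((j.succAbove k : ℕ) < ↑j) ↔ ((j.succAbove k : ℕ) < ↑j + 1) := by omega
        by_cases hlt : ((j.succAbove k : ℕ) < ↑j)
        · rw [if_pos hlt, if_pos (hiff.mp hlt)]
        · rw [if_neg hlt, if_neg (fun hc => hlt (hiff.mpr hc))]
      have hdecomp : ∀ jv : ℕ, ((Measure.pi (M jv)) Sx).toReal =
          (((M jv j).prod (Measure.pi fun k => M jv (j.succAbove k))) T).toReal := by
        intro jv
        have hmp := measurePreserving_piFinSuccAbove (M jv) j
        rw [← hpre, hmp.measure_preimage hT.nullMeasurableSet]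
      have hMj1 : M ↑j j = ν j := by simp [hM_def]
      have hMj2 : M (↑j + 1) j = ρ j := by simp [hM_def, Nat.lt_succ_self]
      simp only [hf_def]
      rw [hdecomp ↑j, hdecomp (↑j + 1), hMj1, hMj2, ← rest_eq]
      exact step_lemma (ν j) (ρ j) (Measure.pi fun k => M ↑j (j.succAbove k))
        (fun w i' => ∑ k, w k i')
        (measurable_pi_iff.2 fun i' =>
          Finset.measurable_sum _ fun k _ => (measurable_pi_apply k).eval)
        (ε j) x (h j)
    have htel : f 0 - f (n + 1) = ∑ j ∈ Finset.range (n + 1), (f j - f (j + 1)) :=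
      (Finset.sum_range_sub' f (n + 1)).symm
    have hgoal : |f 0 - f (n + 1)| ≤ ∑ k : Fin (n + 1), ε k := by
      rw [htel]
      calc |∑ j ∈ Finset.range (n + 1), (f j - f (j + 1))|
          ≤ ∑ j ∈ Finset.range (n + 1), |f j - f (j + 1)| := Finset.abs_sum_le_sum_abs _ _
        _ ≤ ∑ j ∈ Finset.range (n + 1), ε ⟨j % (n + 1), Nat.mod_lt _ (Nat.succ_pos n)⟩ := by
            apply Finset.sum_le_sum
            intro j hj
            have hjlt : j < n + 1 := Finset.mem_range.mp hj
            have := claim ⟨j, hjlt⟩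
            simpa [Nat.mod_eq_of_lt hjlt] using this
        _ = ∑ k : Fin (n + 1), ε k := by
            rw [Finset.sum_range fun j => ε ⟨j % (n+1), Nat.mod_lt _ (Nat.succ_pos n)⟩]
            exact Finset.sum_congr rfl fun k _ => by
              congr 1
              exact Fin.ext (Nat.mod_eq_of_lt k.isLt)
    rw [hf0, hfn] at hgoal
    exact hgoal

theorem cdf_sum_sup_dist_le_sum
    {Ω : Type*} [MeasurableSpace Ω] (μ : Measure Ω) [IsProbabilityMeasure μ]
    (d : ℕ) (hd : 1 ≤ d) (n : ℕ)
    (X Y : Fin n → Ω → Fin d → ℝ)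
    (hXmeas : ∀ k, Measurable (X k)) (hYmeas : ∀ k, Measurable (Y k))
    (hXindep : iIndepFun X μ)
    (hYindep : iIndepFun Y μ)
    (ε : Fin n → ℝ)
    (h : ∀ k : Fin n, ∀ x : Fin d → ℝ, |vecCDF μ (X k) x - vecCDF μ (Y k) x| ≤ ε k) :
    ∀ x : Fin d → ℝ,
      |vecCDF μ (fun ω => ∑ k, X k ω) x - vecCDF μ (fun ω => ∑ k, Y k ω) x| ≤
        ∑ k, ε k := by
  intro x
  have key : ∀ (Z : Fin n → Ω → Fin d → ℝ) (hZ : ∀ k, Measurable (Z k)),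
      iIndepFun Z μ →
      vecCDF μ (fun ω => ∑ k, Z k ω) x =
        ((Measure.pi (fun k => μ.map (Z k))) {z | ∀ i, ∑ k, z k i ≤ x i}).toReal := by
    intro Z hZ hind
    rw [← map_eq_pi μ Z hZ hind,
      Measure.map_apply (measurable_pi_iff.2 hZ) (measurableSet_sumSet x)]
    unfold vecCDF
    congr 2
    ext ω
    simp [Finset.sum_apply]
  rw [key X hXmeas hXindep, key Y hYmeas hYindep]
  haveI : ∀ k, IsProbabilityMeasure ((μ.map (X k))) := fun k =>
    Measure.isProbabilityMeasure_map (hXmeas k).aemeasurable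
  haveI : ∀ k, IsProbabilityMeasure ((μ.map (Y k))) := fun k =>
    Measure.isProbabilityMeasure_map (hYmeas k).aemeasurable
  exact pi_cdf_diff (fun k => μ.map (X k)) (fun k => μ.map (Y k)) ε
    (fun k u => by
      rw [← vecCDF_eq_cdfm μ (hXmeas k), ← vecCDF_eq_cdfm μ (hYmeas k)]
      exact h k u) x
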